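/- Let M be an n-maniplex with the component intersection property, and let {F_{-1}, F_0, ..., F_{i−1}, F_{i+1}, ..., F_{n−1}, F_n} be a chain of P_M missing only rank i. Then the intersection ∩_{j ≠ i} F_j, as a subgraph of M, is a single edge of colour i (two vertices joined by an i-edge). -/

import Mathlib

/-- An `n`-maniplex on vertex (flag) set `V`: a nonempty, connected, properly
`n`-edge-coloured simple `n`-regular graph (encoded by the fixed-point-free
involutions `σ i` giving the unique `i`-neighbour of each vertex) such that the
2-factors of colours `i`, `j` with `|i - j| > 1` are 4-cycles. -/
structure Maniplex (n : ℕ) (V : Type) where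
  nonempty : Nonempty V
  σ : Fin n → V → V
  invol : ∀ i v, σ i (σ i v) = v
  nofix : ∀ i v, σ i v ≠ v
  conn : ∀ u v : V, Relation.ReflTransGen (fun x y => ∃ i, σ i x = y) u v
  comm : ∀ i j : Fin n, (i : ℕ) + 1 < (j : ℕ) → ∀ v,
    σ i (σ j v) = σ j (σ i v) ∧ σ i v ≠ σ j v

namespace Maniplex

variable {n : ℕ} {V : Type}

/-- There is a path from `u` to `v` using only edges with colours in `A`. -/
def ReachIn (M : Maniplex n V) (A : Set (Fin n)) (u v : V) : Prop :=
  Relation.ReflTransGen (fun x y => ∃ i ∈ A, M.σ i x = y) u v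

/-- The `i`-face of `M` containing `v`: the connected component of `v` in the
spanning subgraph with all edges of colour `i` deleted. -/
def face (M : Maniplex n V) (i : Fin n) (v : V) : Set V :=
  {u | M.ReachIn {j | j ≠ i} v u}

/-- `S` is an `i`-face of `M`. -/
def IsFace (M : Maniplex n V) (i : Fin n) (S : Set V) : Prop :=
  ∃ v, S = M.face i v

end Maniplex
namespace Maniplex

variable {n : ℕ} {V : Type}

/-- The type of (proper) faces of a maniplex: a rank together with a face of that rank. -/
def FaceT (M : Maniplex n V) : Type := {F : Fin n × Set V // M.IsFace F.1 F.2}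

/-- The order on faces: `F ≤ G` iff `rank F ≤ rank G` and `F ∩ G ≠ ∅`. -/
def faceLe (M : Maniplex n V) (F G : M.FaceT) : Prop :=
  F.1.1 ≤ G.1.1 ∧ (F.1.2 ∩ G.1.2).Nonempty

/-- The faces of `M` together with adjoined minimum `none` and maximum `some none`. -/
def PFace (M : Maniplex n V) : Type := Option (Option M.FaceT)

/-- The order on `P_M` (with the improper minimum and maximum adjoined). -/
def ple (M : Maniplex n V) : M.PFace → M.PFace → Prop
  | none, _ => True
  | _, some none => True
  | some (some F), some (some G) => M.faceLe F G
  | _, _ => False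

/-- The rank function of `P_M`. -/
def prank (M : Maniplex n V) : M.PFace → ℤ
  | none => -1
  | some none => (n : ℤ)
  | some (some F) => ((F.1.1 : ℕ) : ℤ)

/-- The component intersection property: for every chain of faces, the
intersection of the faces is a connected subgraph of `M`. -/
def CIP (M : Maniplex n V) : Prop :=
  ∀ (k : ℕ) (r : Fin k → Fin n) (S : Fin k → Set V),
    (∀ a, M.IsFace (r a) (S a)) →
    (∀ a b, (S a ∩ S b).Nonempty) →
    ∀ u v : V, (∀ a, u ∈ S a) → (∀ a, v ∈ S a) →
      M.ReachIn {c | ∀ a, c ≠ r a} u v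

/-- The diamond condition for the poset `P_M`. -/
def Diamond (M : Maniplex n V) : Prop :=
  ∀ (i : Fin n) (E F : M.PFace), M.ple E F →
    M.prank E = ((i : ℕ) : ℤ) - 1 → M.prank F = ((i : ℕ) : ℤ) + 1 →
    ∃ H₁ H₂ : M.PFace, H₁ ≠ H₂ ∧
      ∀ H : M.PFace,
        (M.prank H = ((i : ℕ) : ℤ) ∧ M.ple E H ∧ M.ple H F) ↔ (H = H₁ ∨ H = H₂)

/-- A maximal chain of proper faces of `P_M`: one face of each rank,
pairwise incident. -/
def IsFlag (M : Maniplex n V) (S : Fin n → Set V) : Prop :=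
  (∀ i, M.IsFace i (S i)) ∧ ∀ i j, ((S i) ∩ (S j)).Nonempty

/-- `P_M` is faithful: every maximal chain of proper faces has a unique common vertex. -/
def Faithful (M : Maniplex n V) : Prop :=
  ∀ S : Fin n → Set V, M.IsFlag S → ∃! v : V, ∀ i, v ∈ S i

/-- Strong flag connectivity of `P_M`: any two maximal chains `Φ`, `Ψ` are joined
by a sequence of successively adjacent maximal chains all containing `Φ ∩ Ψ`. -/
def SFC (M : Maniplex n V) : Prop :=
  ∀ Φ Ψ : Fin n → Set V, M.IsFlag Φ → M.IsFlag Ψ →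
    Relation.ReflTransGen
      (fun X Y => M.IsFlag Y ∧ (∃ j, X j ≠ Y j ∧ ∀ l, l ≠ j → X l = Y l) ∧
        ∀ i, Φ i = Ψ i → Y i = Φ i) Φ Ψ

/-- The strong path intersection property. -/
def SPIP (M : Maniplex n V) : Prop :=
  ∀ (A B : Set (Fin n)) (u v : V),
    M.ReachIn A u v → M.ReachIn B u v → M.ReachIn (A ∩ B) u v

/-- The weak path intersection property. -/
def WPIP (M : Maniplex n V) : Prop :=
  ∀ i j : Fin n, i < j → ∀ u v : V,
    M.ReachIn {c | i < c} u v → M.ReachIn {c | c < j} u v →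
    M.ReachIn {c | i < c ∧ c < j} u v

end Maniplex
namespace Maniplex

variable {n : ℕ} {V : Type}

lemma reachIn_mono (M : Maniplex n V) {A B : Set (Fin n)} (h : A ⊆ B) {u v : V}
    (hr : M.ReachIn A u v) : M.ReachIn B u v :=
  Relation.ReflTransGen.mono (fun _ _ ⟨c, hc, e⟩ => ⟨c, h hc, e⟩) _ _ hr

lemma reachIn_symm (M : Maniplex n V) {A : Set (Fin n)} {u v : V}
    (h : M.ReachIn A u v) : M.ReachIn A v u := by
  induction h with
  | refl => exact Relation.ReflTransGen.refl
  | tail _ step ih =>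
    obtain ⟨c, hc, e⟩ := step
    exact Relation.ReflTransGen.trans
      (Relation.ReflTransGen.single ⟨c, hc, by rw [← e, M.invol]⟩) ih

lemma mem_face_self (M : Maniplex n V) (j : Fin n) (v : V) : v ∈ M.face j v :=
  Relation.ReflTransGen.refl

lemma face_closed (M : Maniplex n V) {j : Fin n} {v : V} {A : Set (Fin n)}
    (hA : ∀ c ∈ A, c ≠ j) {x z : V} (hx : x ∈ M.face j v) (h : M.ReachIn A x z) :
    z ∈ M.face j v :=
  Relation.ReflTransGen.trans hx (M.reachIn_mono hA h)

lemma face_reach (M : Maniplex n V) {j : Fin n} {v x w : V}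
    (hx : x ∈ M.face j v) (hw : w ∈ M.face j v) : M.ReachIn {c | c ≠ j} x w :=
  Relation.ReflTransGen.trans (M.reachIn_symm hx) hw

lemma reachIn_map (M : Maniplex n V) {A : Set (Fin n)} {d : Fin n}
    (hcomm : ∀ c ∈ A, ∀ x : V, M.σ c (M.σ d x) = M.σ d (M.σ c x))
    {z w : V} (h : M.ReachIn A z w) : M.ReachIn A (M.σ d z) (M.σ d w) := by
  induction h with
  | refl => exact Relation.ReflTransGen.refl
  | tail _ step ih =>
    obtain ⟨c, hc, e⟩ := step
    exact ih.tail ⟨c, hc, by rw [hcomm c hc, e]⟩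

/-- Any path avoiding colour `k` can be reordered: first colours `< k`,
then colours `> k`. -/
lemma sort (M : Maniplex n V) {k : Fin n} {x w : V}
    (h : M.ReachIn {c | c ≠ k} x w) :
    ∃ z : V, M.ReachIn {c | c < k} x z ∧ M.ReachIn {c | k < c} z w := by
  induction h with
  | refl => exact ⟨x, Relation.ReflTransGen.refl, Relation.ReflTransGen.refl⟩
  | tail _ step ih =>
    obtain ⟨z, hxz, hzb⟩ := ih
    obtain ⟨c, hc, e⟩ := step
    rcases lt_or_gt_of_ne (hc : c ≠ k) with hlt | hgt
    · refine ⟨M.σ c z, hxz.tail ⟨c, hlt, rfl⟩, ?_⟩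
      have hmap := M.reachIn_map (A := {c' | k < c'}) (d := c) ?_ hzb
      · rwa [e] at hmap
      · intro c' hc' v
        have hcc : (c : ℕ) + 1 < (c' : ℕ) := by
          have h1 : (c : ℕ) < (k : ℕ) := hlt
          have h2 : (k : ℕ) < (c' : ℕ) := hc'
          omega
        exact ((M.comm c c' hcc v).1).symm
    · exact ⟨z, hxz, hzb.tail ⟨c, hgt, e⟩⟩

lemma reach_single (M : Maniplex n V) {i : Fin n} {u v : V}
    (h : M.ReachIn {c | c = i} u v) : v = u ∨ v = M.σ i u := by
  induction h with
  | refl => exact Or.inl rfl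
  | tail _ step ih =>
    obtain ⟨c, hc, e⟩ := step
    have hc' : c = i := hc
    subst hc'
    rcases ih with h1 | h1
    · right; rw [← e, h1]
    · left; rw [← e, h1, M.invol]

/-- The intersection of a chain of faces missing only rank `i` is nonempty. -/
lemma exists_common (M : Maniplex n V) (i : Fin n) (S : Fin n → Set V)
    (hface : ∀ j, j ≠ i → M.IsFace j (S j))
    (hchain : ∀ j l, j ≠ i → l ≠ i → (S j ∩ S l).Nonempty) :
    ∃ x : V, ∀ j, j ≠ i → x ∈ S j := by
  classical
  suffices h : ∀ t : ℕ, ∃ x : V, ∀ j, j ≠ i → n - t ≤ (j : ℕ) → x ∈ S j by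
    obtain ⟨x, hx⟩ := h n
    exact ⟨x, fun j hj => hx j hj (by omega)⟩
  intro t
  induction t with
  | zero =>
    obtain ⟨x⟩ := M.nonempty
    exact ⟨x, fun j hj hle => absurd hle (by have := j.isLt; omega)⟩
  | succ t ih =>
    obtain ⟨x, hx⟩ := ih
    by_cases ht : n ≤ t
    · exact ⟨x, fun j hj hle => hx j hj (by omega)⟩
    push_neg at ht
    by_cases hmi : n - (t + 1) = (i : ℕ)
    · refine ⟨x, fun j hj hle => hx j hj ?_⟩
      have hne : (j : ℕ) ≠ n - (t + 1) := fun h => hj (Fin.ext (by omega))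
      omega
    · have hmn : n - (t + 1) < n := by omega
      have hjm : (⟨n - (t + 1), hmn⟩ : Fin n) ≠ i := fun h => hmi (by rw [← h])
      by_cases hB : ∃ l : Fin n, l ≠ i ∧ n - (t + 1) < (l : ℕ)
      · obtain ⟨l₁, hl₁i, hl₁m⟩ := hB
        have hex : ∃ a : ℕ, (∃ l : Fin n, l ≠ i ∧ (l : ℕ) = a) ∧ n - (t + 1) < a :=
          ⟨(l₁ : ℕ), ⟨l₁, hl₁i, rfl⟩, hl₁m⟩
        obtain ⟨⟨l, hli, hlval⟩, hml⟩ := Nat.find_spec hex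
        have hgap : ∀ j : Fin n, j ≠ i → n - (t + 1) < (j : ℕ) →
            (j : ℕ) < Nat.find hex → False :=
          fun j hj h1 h2 => Nat.find_min hex h2 ⟨⟨j, hj, rfl⟩, h1⟩
        have hxl : x ∈ S l := hx l hli (by omega)
        obtain ⟨w, hwm, hwl⟩ := hchain ⟨n - (t + 1), hmn⟩ l hjm hli
        obtain ⟨vl, hSl⟩ := hface l hli
        obtain ⟨vm, hSm⟩ := hface ⟨n - (t + 1), hmn⟩ hjm
        have hxw : M.ReachIn {c | c ≠ l} x w := by
          rw [hSl] at hxl hwl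
          exact M.face_reach hxl hwl
        obtain ⟨z, hxz, hzw⟩ := M.sort hxw
        have hzm : z ∈ S ⟨n - (t + 1), hmn⟩ := by
          rw [hSm] at hwm ⊢
          refine M.face_closed (fun c hc hcj => ?_) hwm (M.reachIn_symm hzw)
          have h1 : (l : ℕ) < (c : ℕ) := hc
          have h2 : (c : ℕ) = n - (t + 1) := by rw [hcj]
          omega
        refine ⟨z, fun j hj hle => ?_⟩
        rcases eq_or_lt_of_le hle with heq | hlt2
        · have hjm2 : j = ⟨n - (t + 1), hmn⟩ := Fin.ext (by simp [← heq])
          rw [hjm2]; exact hzm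
        · have hxj : x ∈ S j := hx j hj (by omega)
          obtain ⟨vj, hSj⟩ := hface j hj
          rw [hSj] at hxj ⊢
          refine M.face_closed (fun c hc hcj => ?_) hxj hxz
          have h1 : (c : ℕ) < (l : ℕ) := hc
          have h2 : (c : ℕ) = (j : ℕ) := by rw [hcj]
          exact hgap j hj (by omega) (by omega)
      · push_neg at hB
        obtain ⟨vm, hSm⟩ := hface ⟨n - (t + 1), hmn⟩ hjm
        refine ⟨vm, fun j hj hle => ?_⟩
        have hje : (j : ℕ) ≤ n - (t + 1) := hB j hj
        have hjm2 : j = ⟨n - (t + 1), hmn⟩ := Fin.ext (by simp; omega)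
        rw [hjm2, hSm]; exact M.mem_face_self _ vm

end Maniplex
/-- In a maniplex with the component intersection property, the intersection of
the faces of a chain of `P_M` missing only rank `i` is a single edge of colour
`i`: two vertices joined by an `i`-edge. -/
theorem chain_missing_one_rank_inter_is_edge {n : ℕ} {V : Type}
    (M : Maniplex n V) (hCIP : M.CIP) (i : Fin n) (S : Fin n → Set V)
    (hface : ∀ j, j ≠ i → M.IsFace j (S j))
    (hchain : ∀ j l, j ≠ i → l ≠ i → (S j ∩ S l).Nonempty) :
    ∃ u : V, {x : V | ∀ j, j ≠ i → x ∈ S j} = {u, M.σ i u} := by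
  classical
  obtain ⟨u, hu⟩ := M.exists_common i S hface hchain
  refine ⟨u, Set.eq_of_subset_of_subset ?_ ?_⟩
  · intro v hv
    have hv' : ∀ j, j ≠ i → v ∈ S j := hv
    have hreach : M.ReachIn {c | c = i} u v := by
      by_cases hn : ∃ j0 : Fin n, j0 ≠ i
      · obtain ⟨j0, hj0⟩ := hn
        set r : Fin n → Fin n := fun a => if a = i then j0 else a with hr
        have hri : ∀ a, r a ≠ i := by
          intro a
          simp only [hr]
          split
          · exact hj0
          · assumption
        have h := hCIP n r (fun a => S (r a)) (fun a => hface _ (hri a))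
          (fun a b => hchain _ _ (hri a) (hri b)) u v
          (fun a => hu _ (hri a)) (fun a => hv' _ (hri a))
        refine M.reachIn_mono ?_ h
        intro c hc
        by_contra hci
        have hrc : r c = c := if_neg hci
        exact hc c hrc.symm
      · push_neg at hn
        exact Relation.ReflTransGen.mono
          (fun x y hxy => by obtain ⟨c, e⟩ := hxy; exact ⟨c, hn c, e⟩) _ _ (M.conn u v)
    rcases M.reach_single hreach with h1 | h1
    · rw [h1]; exact Set.mem_insert _ _
    · rw [h1]; exact Set.mem_insert_of_mem _ rfl
  · intro v hv
    rcases hv with rfl | hv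
    · exact hu
    · rw [Set.mem_singleton_iff] at hv
      subst hv
      intro j hj
      obtain ⟨vj, hSj⟩ := hface j hj
      have hu' := hu j hj
      rw [hSj] at hu' ⊢
      exact Relation.ReflTransGen.tail hu' ⟨i, Ne.symm hj, rfl⟩
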